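/- Change of variables for M_{E,Ṡ_E,N}: with Γ finite acting on finite set S, Ṡ orbit representatives (write v̇ ∈ Ṡ for the representative of the orbit of v; assume for simplicity Ṡ indexed by the orbit set S̄ = Γ\S), the map f ↦ φ given by φ(v̄, σ) = f(σ, σ·v̇) for v̄ ∈ S̄ with representative v̇ ∈ Ṡ, defines a Γ-equivariant isomorphism from M_Ṡ (functions f: Γ×S → (1/N)Z/Z satisfying the row-sum, column-sum, and support conditions) onto the group of functions φ: S̄ × Γ → (1/N)Z/Z satisfying: (1) Σ_{σ ∈ Stab_Γ(v̇)} φ(v̄, θσ) = 0 for all θ ∈ Γ, v̄ ∈ S̄; (2) Σ_{v̄ ∈ S̄} φ(v̄, θ) = 0 for all θ ∈ Γ; where Γ acts on the target by (τφ)(v̄, θ) = φ(v̄, τ⁻¹θ). -/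
import Mathlib


/-- The change of variables `f ↦ φ`, `φ(v̄, σ) = f(σ, σ·v̇)`. -/
def Phi {Γ S Sbar : Type} [Group Γ] [MulAction Γ S] (dot : Sbar → S) (N : ℕ)
    (f : Γ × S → ZMod N) : Sbar × Γ → ZMod N :=
  fun x => f (x.2, x.2 • dot x.1)

/-- Lemma lem:mesn_phi: the change of variables `φ(v̄,σ) = f(σ, σ·v̇)`
is a `Γ`-equivariant isomorphism from `M_{E,Ṡ_E,N}` onto the group of functions
`φ : S̄ × Γ → (1/N)ℤ/ℤ` with `Σ_{σ ∈ Stab(v̇)} φ(v̄, θσ) = 0` and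
`Σ_{v̄} φ(v̄, θ) = 0`, with `Γ` acting by `(τφ)(v̄,θ) = φ(v̄, τ⁻¹θ)`. -/
theorem stmt15
    (Γ S Sbar : Type) [Group Γ] [Fintype Γ] [Fintype S] [Fintype Sbar]
    [DecidableEq S] [MulAction Γ S]
    (p : S → Sbar) (hpsur : Function.Surjective p)
    (hporb : ∀ w w' : S, p w = p w' ↔ ∃ σ : Γ, σ • w = w')
    (dot : Sbar → S) (hdot : ∀ q, p (dot q) = q)
    (N : ℕ) :
    -- the map lands in the target group
    (∀ f : Γ × S → ZMod N,
      (∀ σ : Γ, ∑ w : S, f (σ, w) = 0) →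
      (∀ w : S, ∑ σ : Γ, f (σ, w) = 0) →
      (∀ (σ : Γ) (w : S), f (σ, w) ≠ 0 → σ⁻¹ • w ∈ Set.range dot) →
      ((∀ (q : Sbar) (θ : Γ),
          ∑ σ ∈ Finset.univ.filter (fun σ : Γ => σ • dot q = dot q),
            Phi dot N f (q, θ * σ) = 0) ∧
       (∀ θ : Γ, ∑ q : Sbar, Phi dot N f (q, θ) = 0))) ∧
    -- Γ-equivariance
    (∀ (f : Γ × S → ZMod N) (τ : Γ) (q : Sbar) (θ : Γ),
      Phi dot N (fun x => f (τ⁻¹ * x.1, τ⁻¹ • x.2)) (q, θ)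
        = Phi dot N f (q, τ⁻¹ * θ)) ∧
    -- bijectivity onto the target group
    (∀ φ : Sbar × Γ → ZMod N,
      (∀ (q : Sbar) (θ : Γ),
        ∑ σ ∈ Finset.univ.filter (fun σ : Γ => σ • dot q = dot q), φ (q, θ * σ) = 0) →
      (∀ θ : Γ, ∑ q : Sbar, φ (q, θ) = 0) →
      ∃! f : Γ × S → ZMod N,
        ((∀ σ : Γ, ∑ w : S, f (σ, w) = 0) ∧
         (∀ w : S, ∑ σ : Γ, f (σ, w) = 0) ∧
         (∀ (σ : Γ) (w : S), f (σ, w) ≠ 0 → σ⁻¹ • w ∈ Set.range dot)) ∧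
        Phi dot N f = φ) := by
  -- p is constant on orbits
  have hps : ∀ (σ : Γ) (w : S), p (σ • w) = p w :=
    fun σ w => ((hporb w (σ • w)).2 ⟨σ, rfl⟩).symm
  -- the unique representative in the orbit of w is dot (p w)
  have hrange : ∀ (σ : Γ) (w : S), σ⁻¹ • w ∈ Set.range dot → σ⁻¹ • w = dot (p w) := by
    rintro σ w ⟨q, hq⟩
    have h1 : p (σ⁻¹ • w) = q := by rw [← hq, hdot]
    rw [hps] at h1
    rw [← hq, ← h1]
  -- injectivity of dot
  have hdinj : Function.Injective dot := fun a b h => by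
    rw [← hdot a, ← hdot b, h]
  refine ⟨?_, ?_, ?_⟩
  · -- lands in the target group
    intro f hrow hcol hsupp
    constructor
    · intro q θ
      have step1 : ∑ σ ∈ Finset.univ.filter (fun σ : Γ => σ • dot q = dot q),
          Phi dot N f (q, θ * σ)
          = ∑ σ ∈ Finset.univ.filter (fun σ : Γ => σ • dot q = dot q),
            f (θ * σ, θ • dot q) := by
        refine Finset.sum_congr rfl fun σ hσ => ?_
        have h2 := (Finset.mem_filter.1 hσ).2
        simp only [Phi, mul_smul, h2]
      rw [step1]
      have step2 : ∑ σ ∈ Finset.univ.filter (fun σ : Γ => σ • dot q = dot q),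
          f (θ * σ, θ • dot q) = ∑ σ : Γ, f (θ * σ, θ • dot q) := by
        refine Finset.sum_subset (Finset.subset_univ _) fun σ _ hσ => ?_
        by_contra hne
        have h3 := hrange _ _ (hsupp _ _ hne)
        rw [hps, hdot] at h3
        rw [mul_inv_rev, mul_smul, inv_smul_smul] at h3
        exact hσ (Finset.mem_filter.2 ⟨Finset.mem_univ _,
          (smul_eq_iff_eq_inv_smul σ).mpr h3.symm⟩)
      rw [step2]
      rw [Fintype.sum_equiv (Equiv.mulLeft θ) (fun σ => f (θ * σ, θ • dot q))
        (fun ρ => f (ρ, θ • dot q)) (fun σ => rfl)]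
      exact hcol (θ • dot q)
    · intro θ
      have step1 : ∑ q : Sbar, Phi dot N f (q, θ)
          = ∑ w ∈ Finset.univ.image (fun q : Sbar => θ • dot q), f (θ, w) := by
        rw [Finset.sum_image (fun a _ b _ h => hdinj (smul_left_cancel θ h))]
        rfl
      rw [step1]
      rw [Finset.sum_subset (Finset.subset_univ _) (fun w _ hw => ?_)]
      · exact hrow θ
      · by_contra hne
        have h3 := hrange _ _ (hsupp _ _ hne)
        have h4 : w = θ • dot (p w) := by rw [← h3, smul_inv_smul]
        exact hw (Finset.mem_image.2 ⟨p w, Finset.mem_univ _, h4.symm⟩)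
  · -- equivariance
    intro f τ q θ
    simp only [Phi, mul_smul]
  · -- bijectivity
    intro φ hφ1 hφ2
    set g : Γ × S → ZMod N := fun x =>
      if x.1⁻¹ • x.2 = dot (p x.2) then φ (p x.2, x.1) else 0 with hg
    have gdef : ∀ (σ : Γ) (w : S),
        g (σ, w) = if σ⁻¹ • w = dot (p w) then φ (p w, σ) else 0 := fun _ _ => rfl
    have gsupp : ∀ (σ : Γ) (w : S), g (σ, w) ≠ 0 → σ⁻¹ • w ∈ Set.range dot := by
      intro σ w hne
      rw [gdef] at hne
      by_cases h : σ⁻¹ • w = dot (p w)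
      · exact ⟨p w, h.symm⟩
      · simp only [h, if_false] at hne
        exact absurd rfl hne
    have gPhi : Phi dot N g = φ := by
      funext x
      obtain ⟨q, θ⟩ := x
      show g (θ, θ • dot q) = φ (q, θ)
      rw [gdef]
      simp only [hps, hdot, inv_smul_smul, if_true, eq_self_iff_true]
    have grow : ∀ σ : Γ, ∑ w : S, g (σ, w) = 0 := by
      intro σ
      rw [← Finset.sum_subset (Finset.subset_univ
        (Finset.univ.image (fun q : Sbar => σ • dot q))) (fun w _ hw => ?_)]
      · rw [Finset.sum_image (fun a _ b _ h => hdinj (smul_left_cancel σ h))]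
        have : ∀ q : Sbar, g (σ, σ • dot q) = φ (q, σ) := by
          intro q
          rw [gdef]
          simp only [hps, hdot, inv_smul_smul, if_true, eq_self_iff_true]
        rw [Finset.sum_congr rfl fun q _ => this q]
        exact hφ2 σ
      · rw [gdef]
        have h : ¬ (σ⁻¹ • w = dot (p w)) := fun h => hw (Finset.mem_image.2
          ⟨p w, Finset.mem_univ _, by rw [← h, smul_inv_smul]⟩)
        simp only [h, if_false]
    have gcol : ∀ w : S, ∑ σ : Γ, g (σ, w) = 0 := by
      intro w
      obtain ⟨ρ, hρ⟩ := (hporb (dot (p w)) w).1 (hdot (p w))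
      have hρ' : ρ⁻¹ • w = dot (p w) := (eq_inv_smul_iff.mpr hρ).symm
      rw [← Fintype.sum_equiv (Equiv.mulLeft ρ) (fun σ => g (ρ * σ, w))
        (fun σ => g (σ, w)) (fun σ => rfl)]
      have key : ∀ σ : Γ, g (ρ * σ, w)
          = if σ • dot (p w) = dot (p w) then φ (p w, ρ * σ) else 0 := by
        intro σ
        rw [gdef]
        have hcond : ((ρ * σ)⁻¹ • w = dot (p w)) ↔ (σ • dot (p w) = dot (p w)) := by
          rw [mul_inv_rev, mul_smul, hρ']
          constructor
          · intro h; conv_lhs => rw [← h, smul_inv_smul]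
          · intro h; conv_lhs => rw [← h, inv_smul_smul]
        by_cases h : σ • dot (p w) = dot (p w)
        · rw [if_pos (hcond.2 h), if_pos h]
        · rw [if_neg (fun hh => h (hcond.1 hh)), if_neg h]
      rw [Finset.sum_congr rfl fun σ _ => key σ]
      rw [← Finset.sum_filter]
      exact hφ1 (p w) ρ
    refine ⟨g, ⟨⟨grow, gcol, gsupp⟩, gPhi⟩, ?_⟩
    rintro f ⟨⟨hr, hc, hs⟩, hP⟩
    funext x
    obtain ⟨σ, w⟩ := x
    by_cases h : σ⁻¹ • w = dot (p w)
    · have h1 : σ • dot (p w) = w := by rw [← h, smul_inv_smul]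
      have h2 : f (σ, w) = Phi dot N f (p w, σ) := by
        show f (σ, w) = f (σ, σ • dot (p w)); rw [h1]
      rw [h2, hP, gdef]
      simp only [h, if_true, eq_self_iff_true]
    · have h1 : f (σ, w) = 0 := by
        by_contra hne
        exact h (hrange _ _ (hs _ _ hne))
      rw [h1, gdef]
      simp only [h, if_false]
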